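/- Let →₁ ⊆ →₂ be binary relations on a set O. The following four statements are equivalent: (1) the composed relation →₂* ∘ →₁ ∘ →₂* is terminating; (2) the relation →₁ ∘ →₂* is terminating; (3) the relation →₂* ∘ →₁ is terminating; (4) →₁ is terminating relative to →₂. -/

import Mathlib

namespace CycleRewriting

/-- A binary relation is terminating if there is no infinite reduction sequence. -/
def Terminating {beta : Type*} (r : beta → beta → Prop) : Prop :=
  ¬ ∃ f : ℕ → beta, ∀ n : ℕ, r (f n) (f (n + 1))

/-- `r₁` is terminating relative to `r₂` iff every infinite `r₂`-sequence contains only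
finitely many `r₁`-steps. -/
def RelTerminating {beta : Type*} (r₁ r₂ : beta → beta → Prop) : Prop :=
  ¬ ∃ f : ℕ → beta, (∀ n : ℕ, r₂ (f n) (f (n + 1))) ∧
      {n : ℕ | r₁ (f n) (f (n + 1))}.Infinite

/-- The string rewrite relation of an SRS `R`. -/
def Step {α : Type*} (R : Set (List α × List α)) (x y : List α) : Prop :=
  ∃ u v l r, (l, r) ∈ R ∧ x = u ++ l ++ v ∧ y = u ++ r ++ v

/-- The prefix rewrite relation of an SRS `R`. -/
def PrefixStep {α : Type*} (R : Set (List α × List α)) (x y : List α) : Prop :=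
  ∃ l r w, (l, r) ∈ R ∧ x = l ++ w ∧ y = r ++ w

/-- The rotation equivalence `u ~ v` iff `u = w₁w₂` and `v = w₂w₁`. -/
def Sim {α : Type*} (u v : List α) : Prop :=
  ∃ w₁ w₂, u = w₁ ++ w₂ ∧ v = w₂ ++ w₁

/-- The cycle rewrite relation of an SRS `R` (on representatives of `Sim`-classes):
`[u] ∘→_R [v]` iff there are a rule `(l, r) ∈ R` and `w` with `l ++ w ∈ [u]` and
`r ++ w ∈ [v]`. -/
def CycleStep {α : Type*} (R : Set (List α × List α)) (x y : List α) : Prop :=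
  ∃ l r w, (l, r) ∈ R ∧ Sim (l ++ w) x ∧ Sim (r ++ w) y

/-- The shift relation `↷`: move the first symbol of a string to its end. -/
def Rot {α : Type*} (u v : List α) : Prop :=
  ∃ a w, u = a :: w ∧ v = w ++ [a]

/-- `k`-fold composition of a relation. -/
def RelPow {beta : Type*} (r : beta → beta → Prop) : ℕ → beta → beta → Prop
  | 0 => Eq
  | n + 1 => Relation.Comp r (RelPow r n)

/-- `lenSRS R` is the maximal length of a left-hand side of a rule of `R`. -/
noncomputable def lenSRS {α : Type*} (R : Set (List α × List α)) : ℕ :=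
  sSup ((fun p : List α × List α => p.1.length) '' R)

private lemma rt_of_seq {O : Type*} {r : O → O → Prop} {f : ℕ → O}
    (h : ∀ n, r (f n) (f (n + 1))) : ∀ i j, i ≤ j → Relation.ReflTransGen r (f i) (f j) := by
  intro i j hij
  induction hij with
  | refl => exact Relation.ReflTransGen.refl
  | step _ ih => exact ih.tail (h _)

private def posAux (L : ℕ → ℕ) : ℕ → ℕ × ℕ
  | 0 => (0, 0)
  | m + 1 =>
    if (posAux L m).2 + 2 < L (posAux L m).1 then ((posAux L m).1, (posAux L m).2 + 1)
    else ((posAux L m).1 + 1, 0)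

private def sums (L : ℕ → ℕ) : ℕ → ℕ
  | 0 => 0
  | n + 1 => sums L n + (L n - 1)

private lemma posAux_succ (L : ℕ → ℕ) (m n i : ℕ) (h : posAux L m = (n, i)) :
    posAux L (m + 1) = if i + 2 < L n then (n, i + 1) else (n + 1, 0) := by
  rw [posAux, h]

private lemma posAux_inv (L : ℕ → ℕ) (hL : ∀ n, 2 ≤ L n) :
    ∀ m, (posAux L m).2 + 2 ≤ L (posAux L m).1 := by
  intro m
  induction m with
  | zero => simpa [posAux] using hL 0
  | succ m ih =>
    rcases hq : posAux L m with ⟨n, i⟩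
    rw [hq] at ih
    rw [posAux_succ L m n i hq]
    split
    · rename_i hc
      exact (show i + 1 + 2 ≤ L n by omega)
    · exact (show 0 + 2 ≤ L (n + 1) by have := hL (n + 1); omega)

private lemma posAux_add (L : ℕ → ℕ) (j : ℕ) :
    ∀ m n i, posAux L m = (n, i) → i + j + 2 ≤ L n → posAux L (m + j) = (n, i + j) := by
  induction j with
  | zero => intro m n i h _; simpa using h
  | succ j ih =>
    intro m n i h hle
    have h1 : posAux L (m + j) = (n, i + j) := ih m n i h (by omega)
    have h2 : posAux L (m + j + 1) = (n, i + j + 1) := by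
      rw [posAux_succ L (m + j) n (i + j) h1, if_pos (by omega)]
    exact h2

private lemma posAux_block (L : ℕ → ℕ) (m n : ℕ) (h : posAux L m = (n, 0)) (hL : 2 ≤ L n) :
    posAux L (m + (L n - 1)) = (n + 1, 0) := by
  have h1 : posAux L (m + (L n - 2)) = (n, L n - 2) := by
    simpa using posAux_add L (L n - 2) m n 0 h (by omega)
  have h2 : posAux L (m + (L n - 2) + 1) = (n + 1, 0) := by
    rw [posAux_succ L (m + (L n - 2)) n (L n - 2) h1, if_neg (by omega)]
  have h3 : m + (L n - 2) + 1 = m + (L n - 1) := by omega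
  rwa [h3] at h2

private lemma posAux_sums (L : ℕ → ℕ) (hL : ∀ n, 2 ≤ L n) :
    ∀ n, posAux L (sums L n) = (n, 0) := by
  intro n
  induction n with
  | zero => rfl
  | succ n ih => exact posAux_block L (sums L n) n ih (hL n)

private lemma flatten {O : Type*} {r₁ r₂ : O → O → Prop}
    (hsub : ∀ x y, r₁ x y → r₂ x y) (f : ℕ → O)
    (h : ∀ n, Relation.Comp r₁ (Relation.ReflTransGen r₂) (f n) (f (n + 1))) :
    ∃ F : ℕ → O, (∀ m, r₂ (F m) (F (m + 1))) ∧ {m | r₁ (F m) (F (m + 1))}.Infinite := by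
  choose y hy₁ hy₂ using h
  choose l hl₁ hl₂ using fun n => List.exists_isChain_cons_of_relationReflTransGen (hy₂ n)
  obtain ⟨p, hp⟩ : ∃ p : ℕ → List O, p = fun n => f n :: y n :: l n := ⟨_, rfl⟩
  obtain ⟨L, hLdef⟩ : ∃ L : ℕ → ℕ, L = fun n => (l n).length + 2 := ⟨_, rfl⟩
  have hLn : ∀ n, L n = (l n).length + 2 := fun n => by rw [hLdef]
  have hplen : ∀ n, (p n).length = L n := fun n => by rw [hp, hLn]; simp
  have hL : ∀ n, 2 ≤ L n := fun n => by rw [hLn]; omega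
  have hchain : ∀ n, List.Chain' r₂ (p n) := fun n => by
    rw [hp]; exact List.IsChain.cons_cons (hsub _ _ (hy₁ n)) (hl₁ n)
  have hl₂' : ∀ n, (y n :: l n).getD (l n).length (f 0) = f (n + 1) := by
    intro n
    rw [List.getD_eq_getElem _ _ (by simp)]
    conv_rhs => rw [← hl₂ n]
    rw [List.getLast_eq_getElem]
    simp
  have hlast : ∀ n, (p n).getD (L n - 1) (f 0) = f (n + 1) := by
    intro n
    rw [hp, hLn]
    show (f n :: y n :: l n).getD ((l n).length + 1) (f 0) = f (n + 1)
    rw [List.getD_cons_succ]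
    exact hl₂' n
  have hstep0 : ∀ n, (p n).getD 0 (f 0) = f n := fun n => by rw [hp]; rfl
  have hstep1 : ∀ n, (p n).getD 1 (f 0) = y n := fun n => by rw [hp]; rfl
  have hget : ∀ n i, i + 1 < L n → r₂ ((p n).getD i (f 0)) ((p n).getD (i + 1) (f 0)) := by
    intro n i hi
    rw [← hplen n] at hi
    have hc := List.isChain_iff_getElem.mp (hchain n) i (by omega)
    rwa [List.getD_eq_getElem _ _ (show i < (p n).length by omega),
      List.getD_eq_getElem _ _ (show i + 1 < (p n).length from hi)]
  refine ⟨fun m => (p (posAux L m).1).getD (posAux L m).2 (f 0), ?_, ?_⟩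
  · intro m
    have hinv := posAux_inv L hL m
    rcases hq : posAux L m with ⟨n, i⟩
    rw [hq] at hinv
    simp only [hq]
    by_cases hcond : i + 2 < L n
    · rw [posAux_succ L m n i hq, if_pos hcond]
      exact hget n i (by exact (show i + 1 < L n by omega))
    · rw [posAux_succ L m n i hq, if_neg hcond]
      have hinv' : i + 2 ≤ L n := hinv
      have h2 : (p n).getD (i + 1) (f 0) = f (n + 1) := by
        rw [show i + 1 = L n - 1 by omega]
        exact hlast n
      show r₂ ((p n).getD i (f 0)) ((p (n + 1)).getD 0 (f 0))
      rw [hstep0 (n + 1), ← h2]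
      exact hget n i (by omega)
  · have hgood : ∀ m n, posAux L m = (n, 0) →
        r₁ ((p (posAux L m).1).getD (posAux L m).2 (f 0))
          ((p (posAux L (m + 1)).1).getD (posAux L (m + 1)).2 (f 0)) := by
      intro m n hq
      simp only [hq]
      by_cases hcond : 0 + 2 < L n
      · rw [posAux_succ L m n 0 hq, if_pos hcond]
        show r₁ ((p n).getD 0 (f 0)) ((p n).getD 1 (f 0))
        rw [hstep0, hstep1]
        exact hy₁ n
      · rw [posAux_succ L m n 0 hq, if_neg hcond]
        show r₁ ((p n).getD 0 (f 0)) ((p (n + 1)).getD 0 (f 0))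
        rw [hstep0, hstep0]
        have hl0 : (l n).length = 0 := by have := hLn n; have := hL n; omega
        have hyn := hl₂' n
        rw [List.length_eq_zero_iff.mp hl0] at hyn
        simp only [List.length_nil, List.getD_cons_zero] at hyn
        rw [← hyn]
        exact hy₁ n
    have hmono : StrictMono (sums L) := strictMono_nat_of_lt_succ (fun n => by
      have := hL n
      show sums L n < sums L n + (L n - 1)
      omega)
    exact Set.infinite_of_injective_forall_mem hmono.injective
      (fun n => hgood (sums L n) n (posAux_sums L hL n))

/-- characterizations of relative termination. -/
theorem relative_termination_characterizations {O : Type*} (r₁ r₂ : O → O → Prop)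
    (hsub : ∀ x y, r₁ x y → r₂ x y) :
    List.TFAE
      [Terminating (Relation.Comp (Relation.ReflTransGen r₂)
          (Relation.Comp r₁ (Relation.ReflTransGen r₂))),
       Terminating (Relation.Comp r₁ (Relation.ReflTransGen r₂)),
       Terminating (Relation.Comp (Relation.ReflTransGen r₂) r₁),
       RelTerminating r₁ r₂] := by
  tfae_have 1 → 2 := by
    intro h ⟨f, hf⟩
    exact h ⟨f, fun n => ⟨f n, Relation.ReflTransGen.refl, hf n⟩⟩
  tfae_have 1 → 3 := by
    intro h ⟨f, hf⟩
    refine h ⟨f, fun n => ?_⟩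
    obtain ⟨z, hz1, hz2⟩ := hf n
    exact ⟨z, hz1, f (n + 1), hz2, Relation.ReflTransGen.refl⟩
  tfae_have 2 → 1 := by
    intro h ⟨f, hf⟩
    simp only [Relation.Comp] at hf
    choose a ha b hab hb using hf
    exact h ⟨a, fun n => ⟨b n, hab n, (hb n).trans (ha (n + 1))⟩⟩
  tfae_have 3 → 1 := by
    intro h ⟨f, hf⟩
    simp only [Relation.Comp] at hf
    choose a ha b hab hb using hf
    exact h ⟨b, fun n => ⟨a (n + 1), (hb n).trans (ha (n + 1)), hab (n + 1)⟩⟩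
  tfae_have 2 → 4 := by
    intro h ⟨f, hf, hinf⟩
    refine h ⟨fun k => f (Nat.nth (fun n => r₁ (f n) (f (n + 1))) k), fun k => ?_⟩
    refine ⟨f (Nat.nth (fun n => r₁ (f n) (f (n + 1))) k + 1),
      Nat.nth_mem_of_infinite hinf k, ?_⟩
    refine rt_of_seq hf _ _ ?_
    have := (Nat.nth_lt_nth hinf).mpr (show k < k + 1 by omega)
    omega
  tfae_have 4 → 2 := by
    intro h ⟨f, hf⟩
    exact h (flatten hsub f hf)
  tfae_finish

end CycleRewriting
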